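/- arXiv:2308.02758 — 2 statements merged into one kernel-verified Lean document; each statement's English description precedes it below -/
import Mathlib

section
/- For smooth axisymmetric subsonic flows with u_x > 0, the axisymmetric steady Euler system is equivalent to the deformation-curl system: (c²(H,A) − u_x²)∂_x u_x + (c²(H,A) − u_r²)∂_r u_r − u_x u_r(∂_x u_r + ∂_r u_x) + u_r (c²(H,A) + u_θ²)/r = 0; u_x(∂_x u_r − ∂_r u_x) = u_θ∂_r u_θ + u_θ²/r + ((B − ½|u|²)/(Aγ))∂_r A − ∂_r B; (u_x∂_x + u_r∂_r)(ru_θ) = 0; (u_x∂_x + u_r∂_r)A = 0; (u_x∂_x + u_r∂_r)B = 0, where the density is represented through the Bernoulli function as ρ = H(B, A, |u|²) = ((γ−1)(B − ½|u|²)/(Aγ))^{1/(γ−1)}. -/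
noncomputable section
open Real Set MeasureTheory

namespace ContactDisc

variable {E F : Type*} [NormedAddCommGroup E] [NormedSpace ℝ E]
  [NormedAddCommGroup F] [NormedSpace ℝ F]

/-- The set of weighted sup values `δ_x^{max(i+k,0)} |D^i u(x)|`, `x ∈ D`,
where `δ_x` is the distance from `x` to the boundary portion `P`. -/
def wSupSet (i : ℕ) (k : ℝ) (D P : Set E) (u : E → F) : Set ℝ :=
  {t | ∃ x ∈ D, t = Metric.infDist x P ^ max ((i : ℝ) + k) 0 * ‖iteratedFDeriv ℝ i u x‖}

/-- The set of weighted Hölder quotients of the `m`-th derivative. -/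
def wSemiSet (m : ℕ) (α k : ℝ) (D P : Set E) (u : E → F) : Set ℝ :=
  {t | ∃ x ∈ D, ∃ y ∈ D, x ≠ y ∧
    t = min (Metric.infDist x P) (Metric.infDist y P) ^ max ((m : ℝ) + α + k) 0 *
        (‖iteratedFDeriv ℝ m u x - iteratedFDeriv ℝ m u y‖ / ‖x - y‖ ^ α)}

/-- The weighted Hölder norm `‖u‖_{m,α;D}^{(k,P)}`. -/
def wNorm (m : ℕ) (α k : ℝ) (D P : Set E) (u : E → F) : ℝ :=
  (∑ i ∈ Finset.range (m + 1), sSup (wSupSet i k D P u)) + sSup (wSemiSet m α k D P u)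

/-- Membership in the weighted Hölder space `C_{m,α}^{(k,P)}(D)`. -/
def MemW (m : ℕ) (α k : ℝ) (D P : Set E) (u : E → F) : Prop :=
  ContDiffOn ℝ m u D ∧ (∀ i ≤ m, BddAbove (wSupSet i k D P u)) ∧
    BddAbove (wSemiSet m α k D P u)

def hSupSet (i : ℕ) (D : Set E) (u : E → F) : Set ℝ :=
  {t | ∃ x ∈ D, t = ‖iteratedFDeriv ℝ i u x‖}

def hSemiSet (m : ℕ) (α : ℝ) (D : Set E) (u : E → F) : Set ℝ :=
  {t | ∃ x ∈ D, ∃ y ∈ D, x ≠ y ∧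
    t = ‖iteratedFDeriv ℝ m u x - iteratedFDeriv ℝ m u y‖ / ‖x - y‖ ^ α}

/-- The Hölder norm `‖u‖_{m,α;D}`. -/
def hNorm (m : ℕ) (α : ℝ) (D : Set E) (u : E → F) : ℝ :=
  (∑ i ∈ Finset.range (m + 1), sSup (hSupSet i D u)) + sSup (hSemiSet m α D u)

/-- Membership in the Hölder space `C^{m,α}(D)`. -/
def MemH (m : ℕ) (α : ℝ) (D : Set E) (u : E → F) : Prop :=
  ContDiffOn ℝ m u D ∧ (∀ i ≤ m, BddAbove (hSupSet i D u)) ∧ BddAbove (hSemiSet m α D u)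

/-- Partial derivative in the first (axial) variable. -/
def dx (u : ℝ × ℝ → ℝ) (p : ℝ × ℝ) : ℝ := fderiv ℝ u p (1, 0)

/-- Partial derivative in the second (radial/Lagrangian) variable. -/
def dr (u : ℝ × ℝ → ℝ) (p : ℝ × ℝ) : ℝ := fderiv ℝ u p (0, 1)

/-- The Lagrangian domain `Ω = (0,L) × (0, 1/2)`. -/
def Om (L : ℝ) : Set (ℝ × ℝ) := Ioo 0 L ×ˢ Ioo 0 (1 / 2)

/-- The (straightened) contact discontinuity `Σ = (0,L) × {1/2}`. -/
def Sig (L : ℝ) : Set (ℝ × ℝ) := Ioo 0 L ×ˢ {(1 / 2 : ℝ)}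

/-- The density represented through the Bernoulli function:
`H(B,A,q²) = ((γ-1)(B - q²/2)/(Aγ))^{1/(γ-1)}`. -/
def Hd (γ B A q2 : ℝ) : ℝ := ((γ - 1) * (B - q2 / 2) / (A * γ)) ^ (1 / (γ - 1))

/-- Square of the sound speed `c²(ρ,A) = Aγρ^{γ-1}`. -/
def cSq (γ ρ A : ℝ) : ℝ := A * γ * ρ ^ (γ - 1)

/-- Background entropy `A_b = P_b/ρ_b^γ`. -/
def Ab (γ ρb Pb : ℝ) : ℝ := Pb / ρb ^ γ

/-- Background Bernoulli quantity `B_b = u_b²/2 + γP_b/((γ-1)ρ_b)`. -/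
def Bb (γ ρb ub Pb : ℝ) : ℝ := ub ^ 2 / 2 + γ * Pb / ((γ - 1) * ρb)

/-- Background mass flux `J_b = ρ_b u_b`. -/
def Jb (ρb ub : ℝ) : ℝ := ρb * ub

/-- Background Mach number squared `(M_b)² = u_b²/c²(ρ_b, A_b)`. -/
def Mb2 (γ ρb ub Pb : ℝ) : ℝ := ub ^ 2 / cSq γ ρb (Ab γ ρb Pb)

/-- Background inner subsonic state. -/
structure Background (γ ρb ub Pb L α : ℝ) : Prop where
  hγ : 1 < γ
  hρb : 0 < ρb
  hub : 0 < ub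
  hPb : 0 < Pb
  subsonic : ub ^ 2 < γ * Pb / ρb
  normalized : ρb * ub = 2
  hL : 0 < L
  hα : α ∈ Ioo (1 / 2 : ℝ) 1

/-- Entrance data transported to the Lagrangian variable (paper (3-12)). -/
def tData (J0 f : ℝ → ℝ) (y : ℝ) : ℝ := f (Real.sqrt (∫ s in (0:ℝ)..y, 2 * s / J0 s))

/-- Size of the perturbation of the entrance data:
`σ_cd = ‖(J₀,ν₀,A₀,B₀) - (J_b,0,A_b,B_b)‖_{1,α;[0,1/2]}`. -/
def sigmaCD (α γ ρb ub Pb : ℝ) (J0 ν0 A0 B0 : ℝ → ℝ) : ℝ :=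
  hNorm 1 α (Icc (0:ℝ) (1/2)) (fun r => J0 r - Jb ρb ub) +
  hNorm 1 α (Icc (0:ℝ) (1/2)) ν0 +
  hNorm 1 α (Icc (0:ℝ) (1/2)) (fun r => A0 r - Ab γ ρb Pb) +
  hNorm 1 α (Icc (0:ℝ) (1/2)) (fun r => B0 r - Bb γ ρb ub Pb)

/-- `C^{1,α}` distance of two sets of entrance data. -/
def dataDist (α : ℝ) (J0 ν0 A0 B0 J0' ν0' A0' B0' : ℝ → ℝ) : ℝ :=
  hNorm 1 α (Icc (0:ℝ) (1/2)) (fun r => J0 r - J0' r) +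
  hNorm 1 α (Icc (0:ℝ) (1/2)) (fun r => ν0 r - ν0' r) +
  hNorm 1 α (Icc (0:ℝ) (1/2)) (fun r => A0 r - A0' r) +
  hNorm 1 α (Icc (0:ℝ) (1/2)) (fun r => B0 r - B0' r)

/-- `C^{1,α}` regularity of the entrance data. -/
def MemData (α : ℝ) (J0 ν0 A0 B0 : ℝ → ℝ) : Prop :=
  MemH 1 α (Icc (0:ℝ) (1/2)) J0 ∧ MemH 1 α (Icc (0:ℝ) (1/2)) ν0 ∧
  MemH 1 α (Icc (0:ℝ) (1/2)) A0 ∧ MemH 1 α (Icc (0:ℝ) (1/2)) B0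

/-- The density `ρ̂ = H(B̃₀, Ã₀, |u|²)` expressed through the perturbation `W`. -/
def rhoW (γ ub : ℝ) (tA0 tB0 : ℝ → ℝ) (W1 W2 W3 : ℝ × ℝ → ℝ) (p : ℝ × ℝ) : ℝ :=
  Hd γ (tB0 p.2) (tA0 p.2) ((W1 p + ub) ^ 2 + W2 p ^ 2 + W3 p ^ 2)

/-- The modified radius `r̂(y₁,y₂) = (2∫₀^{y₂} 2s/(ρ̂ u_x)(y₁,s) ds)^{1/2}`. -/
def rW (γ ub : ℝ) (tA0 tB0 : ℝ → ℝ) (W1 W2 W3 : ℝ × ℝ → ℝ) (p : ℝ × ℝ) : ℝ :=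
  Real.sqrt (2 * ∫ s in (0:ℝ)..p.2,
    2 * s / (rhoW γ ub tA0 tB0 W1 W2 W3 (p.1, s) * (W1 (p.1, s) + ub)))

/-- `Λ̂(y₂) = (2∫₀^{y₂} 2s/J̃₀(s) ds)^{1/2} ν̃₀(y₂)`. -/
def LamHat (tJ0 tν0 : ℝ → ℝ) (y : ℝ) : ℝ :=
  Real.sqrt (2 * ∫ s in (0:ℝ)..y, 2 * s / tJ0 s) * tν0 y

/-- The swirl velocity `W₃ = Λ̂(y₂)/r̂(y₁,y₂)` determined by the angular momentum. -/
def swirlW (γ ub : ℝ) (tJ0 tν0 tA0 tB0 : ℝ → ℝ) (W1 W2 W3 : ℝ × ℝ → ℝ) (p : ℝ × ℝ) : ℝ :=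
  LamHat tJ0 tν0 p.2 / rW γ ub tA0 tB0 W1 W2 W3 p

/-- Membership in the iteration set `J(δ₁)`. -/
structure InJball (L α δ1 : ℝ) (W1 W2 W3 : ℝ × ℝ → ℝ) : Prop where
  mem1 : MemW 1 α (-α) (Om L) (Sig L) W1
  mem2 : MemW 1 α (-α) (Om L) (Sig L) W2
  mem3 : MemW 1 α (-α) (Om L) (Sig L) W3
  small : wNorm 1 α (-α) (Om L) (Sig L) W1 + wNorm 1 α (-α) (Om L) (Sig L) W2 +
      wNorm 1 α (-α) (Om L) (Sig L) W3 ≤ δ1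
  bc2axis : ∀ y1 : ℝ, W2 (y1, 0) = 0
  bc2exit : ∀ y2 : ℝ, W2 (L, y2) = 0
  bc3axis : ∀ y1 : ℝ, W3 (y1, 0) = 0

/-- The nonlinear interior remainder `F₁(Ŵ,∇Ŵ,Â,B̂)` (paper, Section 4.1). -/
def F1fun (γ ρb ub Pb : ℝ) (tA0 tB0 : ℝ → ℝ) (W1 W2 W3 : ℝ × ℝ → ℝ) (p : ℝ × ℝ) : ℝ :=
  let ρ := rhoW γ ub tA0 tB0 W1 W2 W3 p
  let r := rW γ ub tA0 tB0 W1 W2 W3 p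
  let c2 := cSq γ ρ (tA0 p.2)
  let c2b := cSq γ ρb (Ab γ ρb Pb)
  let Bh := tB0 p.2 - Bb γ ρb ub Pb
  (c2 - (ub + W1 p) ^ 2) * (r * ρ * W2 p / (2 * p.2)) * dr W1 p
  + W2 p ^ 2 * (r * ρ * (ub + W1 p) / (2 * p.2)) * dr W2 p
  - (c2 / r - c2b / p.2) * W2 p
  - ((γ - 1) * Bh - (γ + 1) / 2 * W1 p ^ 2 - (γ - 1) / 2 * W2 p ^ 2
      - (γ - 1) / 2 * W3 p ^ 2 - (γ + 1) * ub * W1 p) * dx W1 p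
  - ((γ - 1) * Bh - (γ - 1) / 2 * W1 p ^ 2 - (γ - 1) / 2 * W2 p ^ 2
      - (γ - 1) / 2 * W3 p ^ 2 - (γ - 1) * ub * W1 p) * dr W2 p
  - W3 p ^ 2 / r * W2 p
  + (W1 p + ub) * W2 p *
      (dx W2 p - r * ρ * W2 p / (2 * p.2) * dr W2 p + r * ρ * (W1 p + ub) / (2 * p.2) * dr W1 p)

/-- The nonlinear interior remainder `F₂(Ŵ,∇Ŵ,Â,B̂)` (paper, Section 4.1). -/
def F2fun (γ ub : ℝ) (tA0 tB0 : ℝ → ℝ) (W1 W2 W3 : ℝ × ℝ → ℝ) (p : ℝ × ℝ) : ℝ :=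
  let ρ := rhoW γ ub tA0 tB0 W1 W2 W3 p
  let r := rW γ ub tA0 tB0 W1 W2 W3 p
  1 / (ub + W1 p) *
    (r * ρ * (W1 p + ub) / (2 * p.2) * W3 p * dr W3 p + W3 p ^ 2 / r
      + r * ρ * (W1 p + ub) / (2 * p.2) * (ρ ^ (γ - 1) / (γ - 1)) * deriv tA0 p.2
      - r * ρ * (W1 p + ub) / (2 * p.2) * deriv tB0 p.2)
  + 1 / (ub + W1 p) * (r * ρ * W2 p / (2 * p.2) * dr W2 p)

/-- The entrance boundary remainder `F₃(Ŵ,Ĵ,Â,B̂)` (paper, Section 4.1). -/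
def F3fun (γ ρb ub Pb : ℝ) (tJ0 tA0 tB0 : ℝ → ℝ) (W1 W2 W3 : ℝ × ℝ → ℝ) (y : ℝ) : ℝ :=
  let M2 := Mb2 γ ρb ub Pb
  let ρhat := rhoW γ ub tA0 tB0 W1 W2 W3 (0, y)
  let ρ0 := Hd γ (Bb γ ρb ub Pb) (Ab γ ρb Pb) (ub ^ 2)
  (tJ0 y - Jb ρb ub) / (ρb * (1 - M2))
  - W1 (0, y) / (ρb * (1 - M2)) * (ρhat - ρ0)
  - ub / (ρb * (1 - M2)) * (ρhat - ρ0 + Jb ρb ub / cSq γ ρb (Ab γ ρb Pb) * W1 (0, y))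

/-- The kinematic boundary term `F₄(Ŵ, g_cd) = (u_b + Ŵ₁) g_cd'` on `Σ`. -/
def F4fun (ub : ℝ) (W1 : ℝ × ℝ → ℝ) (w : ℝ → ℝ) (y1 : ℝ) : ℝ :=
  (ub + W1 (y1, 1/2)) * w y1

/-- The linear boundary value problem (4-6). -/
structure SolvesLinear (L M2 : ℝ) (G1 G2 : ℝ × ℝ → ℝ) (G3 G4 : ℝ → ℝ)
    (W1 W2 : ℝ × ℝ → ℝ) : Prop where
  eq1 : ∀ p ∈ Om L, (1 - M2) * dx W1 p + dr W2 p + W2 p / p.2 = G1 p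
  eq2 : ∀ p ∈ Om L, dx W2 p - dr W1 p = G2 p
  bc0 : ∀ y ∈ Ioo (0:ℝ) (1/2), W1 (0, y) = G3 y
  bcL : ∀ y ∈ Ioo (0:ℝ) (1/2), W2 (L, y) = 0
  bcS : ∀ y1 ∈ Ioo (0:ℝ) L, W2 (y1, 1/2) = G4 y1
  bcA : ∀ y1 ∈ Ioo (0:ℝ) L, W2 (y1, 0) = 0

/-- The density as a function of the Lagrangian velocity components. -/
def rhoU (γ : ℝ) (tA0 tB0 : ℝ → ℝ) (ux ur uθ : ℝ × ℝ → ℝ) (p : ℝ × ℝ) : ℝ :=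
  Hd γ (tB0 p.2) (tA0 p.2) (ux p ^ 2 + ur p ^ 2 + uθ p ^ 2)

/-- The radius as a nonlocal function of the Lagrangian velocity (paper (3-10)). -/
def rU (γ : ℝ) (tA0 tB0 : ℝ → ℝ) (ux ur uθ : ℝ × ℝ → ℝ) (p : ℝ × ℝ) : ℝ :=
  Real.sqrt (2 * ∫ s in (0:ℝ)..p.2, 2 * s / (rhoU γ tA0 tB0 ux ur uθ (p.1, s) * ux (p.1, s)))

/-- First equation of the nonlinear system (3-20). -/
def NLeq1 (γ : ℝ) (tA0 tB0 : ℝ → ℝ) (ux ur uθ : ℝ × ℝ → ℝ) (p : ℝ × ℝ) : Prop :=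
  let ρ := rhoU γ tA0 tB0 ux ur uθ p
  let r := rU γ tA0 tB0 ux ur uθ p
  let c2 := cSq γ ρ (tA0 p.2)
  let Kx := r * ρ * ux p / (2 * p.2)
  let Kr := r * ρ * ur p / (2 * p.2)
  (c2 - ux p ^ 2) * (dx ux p - Kr * dr ux p) + (c2 - ur p ^ 2) * (Kx * dr ur p)
    + c2 / r * ur p + uθ p ^ 2 / r * ur p
    = ux p * ur p * (dx ur p - Kr * dr ur p + Kx * dr ux p)

/-- Second equation of the nonlinear system (3-20). -/
def NLeq2 (γ : ℝ) (tA0 tB0 : ℝ → ℝ) (ux ur uθ : ℝ × ℝ → ℝ) (p : ℝ × ℝ) : Prop :=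
  let ρ := rhoU γ tA0 tB0 ux ur uθ p
  let r := rU γ tA0 tB0 ux ur uθ p
  let Kx := r * ρ * ux p / (2 * p.2)
  let Kr := r * ρ * ur p / (2 * p.2)
  ux p * (dx ur p - Kr * dr ur p - Kx * dr ux p)
    = Kx * uθ p * dr uθ p + uθ p ^ 2 / r + Kx * (ρ ^ (γ - 1) / (γ - 1)) * deriv tA0 p.2
      - Kx * deriv tB0 p.2

/-- Third equation of the nonlinear system (3-20): `∂_{y₁}(r u_θ) = 0`. -/
def NLeq3 (γ : ℝ) (tA0 tB0 : ℝ → ℝ) (ux ur uθ : ℝ × ℝ → ℝ) (p : ℝ × ℝ) : Prop :=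
  fderiv ℝ (fun q => rU γ tA0 tB0 ux ur uθ q * uθ q) p (1, 0) = 0

/-- The nonlinear boundary value problem (3-20)–(3-21). -/
structure SolvesNonlinear (γ L : ℝ) (tJ0 tν0 tA0 tB0 w : ℝ → ℝ)
    (ux ur uθ : ℝ × ℝ → ℝ) : Prop where
  eq1 : ∀ p ∈ Om L, NLeq1 γ tA0 tB0 ux ur uθ p
  eq2 : ∀ p ∈ Om L, NLeq2 γ tA0 tB0 ux ur uθ p
  eq3 : ∀ p ∈ Om L, NLeq3 γ tA0 tB0 ux ur uθ p
  bcJ : ∀ y ∈ Ioo (0:ℝ) (1/2), rhoU γ tA0 tB0 ux ur uθ (0, y) * ux (0, y) = tJ0 y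
  bcν : ∀ y ∈ Ioo (0:ℝ) (1/2), uθ (0, y) = tν0 y
  bcL : ∀ y ∈ Ioo (0:ℝ) (1/2), ur (L, y) = 0
  bcS : ∀ y1 ∈ Ioo (0:ℝ) L, ur (y1, 1/2) = ux (y1, 1/2) * w y1
  bcA : ∀ y1 ∈ Ioo (0:ℝ) L, ur (y1, 0) = 0

/-- The nonlinear problem in perturbation form (5-8), for entrance data `(J₀,ν₀,A₀,B₀)`
and contact discontinuity slope `w`. -/
structure SolvesPert (γ ρb ub Pb L : ℝ) (J0 ν0 A0 B0 w : ℝ → ℝ)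
    (W1 W2 W3 : ℝ × ℝ → ℝ) : Prop where
  swirl : ∀ p ∈ Om L, W3 p =
    swirlW γ ub (tData J0 J0) (tData J0 ν0) (tData J0 A0) (tData J0 B0) W1 W2 W3 p
  lin : SolvesLinear L (Mb2 γ ρb ub Pb)
    (fun p => F1fun γ ρb ub Pb (tData J0 A0) (tData J0 B0) W1 W2 W3 p / cSq γ ρb (Ab γ ρb Pb))
    (F2fun γ ub (tData J0 A0) (tData J0 B0) W1 W2 W3)
    (F3fun γ ρb ub Pb (tData J0 J0) (tData J0 A0) (tData J0 B0) W1 W2 W3)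
    (fun y1 => (ub + W1 (y1, 1/2)) * w y1) W1 W2

/-- The linearized problem (5-15) at `(W, w)` in the direction `w₁`, with solution `Z`. -/
structure SolvesLinearized (γ ρb ub Pb L : ℝ) (J0 ν0 A0 B0 w w1 : ℝ → ℝ)
    (W1 W2 W3 Z1 Z2 Z3 : ℝ × ℝ → ℝ) : Prop where
  swirl : ∀ p ∈ Om L, Z3 p = deriv (fun t : ℝ =>
    swirlW γ ub (tData J0 J0) (tData J0 ν0) (tData J0 A0) (tData J0 B0)
      (fun q => W1 q + t * Z1 q) (fun q => W2 q + t * Z2 q) (fun q => W3 q + t * Z3 q) p) 0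
  eq1 : ∀ p ∈ Om L, (1 - Mb2 γ ρb ub Pb) * dx Z1 p + dr Z2 p + Z2 p / p.2 =
    deriv (fun t : ℝ => F1fun γ ρb ub Pb (tData J0 A0) (tData J0 B0)
      (fun q => W1 q + t * Z1 q) (fun q => W2 q + t * Z2 q) (fun q => W3 q + t * Z3 q) p /
        cSq γ ρb (Ab γ ρb Pb)) 0
  eq2 : ∀ p ∈ Om L, dx Z2 p - dr Z1 p =
    deriv (fun t : ℝ => F2fun γ ub (tData J0 A0) (tData J0 B0)
      (fun q => W1 q + t * Z1 q) (fun q => W2 q + t * Z2 q) (fun q => W3 q + t * Z3 q) p) 0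
  bc0 : ∀ y ∈ Ioo (0:ℝ) (1/2), Z1 (0, y) =
    deriv (fun t : ℝ => F3fun γ ρb ub Pb (tData J0 J0) (tData J0 A0) (tData J0 B0)
      (fun q => W1 q + t * Z1 q) (fun q => W2 q + t * Z2 q) (fun q => W3 q + t * Z3 q) y) 0
  bcL : ∀ y ∈ Ioo (0:ℝ) (1/2), Z2 (L, y) = 0
  bcS : ∀ y1 ∈ Ioo (0:ℝ) L, Z2 (y1, 1/2) = (ub + W1 (y1, 1/2)) * w1 y1 + Z1 (y1, 1/2) * w y1
  bcA : ∀ y1 ∈ Ioo (0:ℝ) L, Z2 (y1, 0) = 0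

/-- The pressure `N(W₁,W₂,W₃,Ã₀,B̃₀) = Ã₀(1/2) ρ(...)^γ` evaluated on `y₂ = 1/2`. -/
def Npress (γ ub : ℝ) (J0 A0 B0 : ℝ → ℝ) (W1 W2 W3 : ℝ × ℝ → ℝ) (y1 : ℝ) : ℝ :=
  tData J0 A0 (1/2) * rhoW γ ub (tData J0 A0) (tData J0 B0) W1 W2 W3 (y1, 1/2) ^ γ

/-- The derivative `D_wQ(φ₀,w)(w₁) = Σ_j ∂_{W_j}N · W_j⁰` along the linearized solution `Z`. -/
def DQfun (γ ub : ℝ) (J0 A0 B0 : ℝ → ℝ) (W1 W2 W3 Z1 Z2 Z3 : ℝ × ℝ → ℝ) (y1 : ℝ) : ℝ :=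
  deriv (fun t : ℝ => Npress γ ub J0 A0 B0 (fun q => W1 q + t * Z1 q)
    (fun q => W2 q + t * Z2 q) (fun q => W3 q + t * Z3 q) y1) 0

/-- The steady axisymmetric Euler system (2-2) at a point `p = (x,r)`, with
entropy `A = P/ρ^γ`. -/
def EulerAx (γ : ℝ) (ρ ux ur uθ P : ℝ × ℝ → ℝ) (p : ℝ × ℝ) : Prop :=
  dx (fun q => ρ q * ux q) p + dr (fun q => ρ q * ur q) p + ρ p * ur p / p.2 = 0 ∧
  ρ p * (ux p * dx ux p + ur p * dr ux p) + dx P p = 0 ∧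
  ρ p * (ux p * dx ur p + ur p * dr ur p) - ρ p * uθ p ^ 2 / p.2 + dr P p = 0 ∧
  ρ p * (ux p * dx (fun q => q.2 * uθ q) p + ur p * dr (fun q => q.2 * uθ q) p) = 0 ∧
  ρ p * (ux p * dx (fun q => P q / ρ q ^ γ) p + ur p * dr (fun q => P q / ρ q ^ γ) p) = 0

/-- The deformation-curl system (3-17) at a point, where the density is
represented through the Bernoulli function. -/
def DCAx (γ : ℝ) (ux ur uθ A B : ℝ × ℝ → ℝ) (p : ℝ × ℝ) : Prop :=
  let q2 := ux p ^ 2 + ur p ^ 2 + uθ p ^ 2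
  let ρ := Hd γ (B p) (A p) q2
  let c2 := cSq γ ρ (A p)
  ((c2 - ux p ^ 2) * dx ux p + (c2 - ur p ^ 2) * dr ur p
      - ux p * ur p * (dx ur p + dr ux p) + ur p * (c2 + uθ p ^ 2) / p.2 = 0) ∧
  (ux p * (dx ur p - dr ux p) = uθ p * dr uθ p + uθ p ^ 2 / p.2
      + (B p - q2 / 2) / (A p * γ) * dr A p - dr B p) ∧
  (ux p * dx (fun q => q.2 * uθ q) p + ur p * dr (fun q => q.2 * uθ q) p = 0) ∧
  (ux p * dx A p + ur p * dr A p = 0) ∧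
  (ux p * dx B p + ur p * dr B p = 0)

/-- Three-dimensional Euclidean space. -/
abbrev E3 := EuclideanSpace ℝ (Fin 3)

/-- Standard basis of `ℝ³`. -/
def e3 : Fin 3 → E3 := fun i => EuclideanSpace.single i 1

/-- Distance to the `x₁`-axis. -/
def R3 (p : E3) : ℝ := Real.sqrt (p 1 ^ 2 + p 2 ^ 2)

/-- A cylindrical function viewed as a function on `ℝ³`. -/
def cyl3 (f : ℝ × ℝ → ℝ) (p : E3) : ℝ := f (p 0, R3 p)

/-- The Cartesian components of the axisymmetric velocity field
`u = u_x e_x + u_r e_r + u_θ e_θ`. -/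
def u3comp (uxc urc uθc : ℝ × ℝ → ℝ) (i : Fin 3) (p : E3) : ℝ :=
  if i = 0 then cyl3 uxc p
  else if i = 1 then cyl3 urc p * (p 1 / R3 p) - cyl3 uθc p * (p 2 / R3 p)
  else cyl3 urc p * (p 2 / R3 p) + cyl3 uθc p * (p 1 / R3 p)

/-- The classical three-dimensional steady full Euler system at the point `p`. -/
def Euler3Classical (γ : ℝ) (ρ3 P3 : E3 → ℝ) (u3 : Fin 3 → E3 → ℝ) (p : E3) : Prop :=
  (∑ i, fderiv ℝ (fun q => ρ3 q * u3 i q) p (e3 i)) = 0 ∧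
  (∀ j, (∑ i, fderiv ℝ (fun q => ρ3 q * u3 i q * u3 j q) p (e3 i)) +
    fderiv ℝ P3 p (e3 j) = 0) ∧
  (∑ i, fderiv ℝ (fun q => ρ3 q * u3 i q * ((∑ j, u3 j q ^ 2) / 2 + P3 q / ((γ - 1) * ρ3 q))
      + u3 i q * P3 q) p (e3 i)) = 0

end ContactDisc

namespace ContactDisc

section Statement4Aux

private lemma line_hasDerivAt (q v : ℝ × ℝ) : HasDerivAt (fun t : ℝ => q + t • v) v 0 := by
  simpa using ((hasDerivAt_id (0 : ℝ)).smul_const v).const_add q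

private lemma comp_line {f : ℝ × ℝ → ℝ} {q : ℝ × ℝ} (hf : DifferentiableAt ℝ f q) (v : ℝ × ℝ) :
    HasDerivAt (fun t : ℝ => f (q + t • v)) (fderiv ℝ f q v) 0 := by
  have hF : HasFDerivAt f (fderiv ℝ f q) ((fun t : ℝ => q + t • v) 0) := by
    simpa using hf.hasFDerivAt
  simpa [Function.comp_def] using hF.comp_hasDerivAt 0 (line_hasDerivAt q v)

private lemma cancel_left {x y : ℝ} (hx : x ≠ 0) (h : x * y = 0) : y = 0 :=
  (mul_eq_zero.mp h).resolve_left hx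

end Statement4Aux

set_option maxHeartbeats 2000000 in
/-- for smooth axisymmetric subsonic flows with `u_x > 0`, the
axisymmetric steady Euler system (with density represented through the Bernoulli
function as `ρ = H(B, A, |u|²)` and pressure `P = Aρ^γ`) is equivalent to the
deformation-curl system (3-17). -/
theorem statement_4 (γ : ℝ) (hγ : 1 < γ)
    (ux ur uθ A B : ℝ × ℝ → ℝ)
    (huxreg : ContDiff ℝ 1 ux) (hurreg : ContDiff ℝ 1 ur) (huθreg : ContDiff ℝ 1 uθ)
    (hAreg : ContDiff ℝ 1 A) (hBreg : ContDiff ℝ 1 B)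
    (hApos : ∀ q : ℝ × ℝ, 0 < A q)
    (hBpos : ∀ q : ℝ × ℝ, 0 < B q - (ux q ^ 2 + ur q ^ 2 + uθ q ^ 2) / 2)
    (hux : ∀ q : ℝ × ℝ, 0 < ux q)
    (hsubsonic : ∀ q : ℝ × ℝ, 0 < q.2 →
      ux q ^ 2 + ur q ^ 2 + uθ q ^ 2 <
        cSq γ (Hd γ (B q) (A q) (ux q ^ 2 + ur q ^ 2 + uθ q ^ 2)) (A q)) :
    (∀ q : ℝ × ℝ, 0 < q.2 →
      EulerAx γ (fun p => Hd γ (B p) (A p) (ux p ^ 2 + ur p ^ 2 + uθ p ^ 2)) ux ur uθ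
        (fun p => A p * Hd γ (B p) (A p) (ux p ^ 2 + ur p ^ 2 + uθ p ^ 2) ^ γ) q) ↔
    (∀ q : ℝ × ℝ, 0 < q.2 → DCAx γ ux ur uθ A B q) := by
  have hγ1 : γ - 1 ≠ 0 := sub_ne_zero.mpr hγ.ne'
  have hγ1pos : (0:ℝ) < γ - 1 := sub_pos.mpr hγ
  have hγpos : (0:ℝ) < γ := lt_trans one_pos hγ
  have dA : ∀ p, DifferentiableAt ℝ A p := fun p => (hAreg.differentiable one_ne_zero).differentiableAt
  have dB : ∀ p, DifferentiableAt ℝ B p := fun p => (hBreg.differentiable one_ne_zero).differentiableAt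
  have dX : ∀ p, DifferentiableAt ℝ ux p := fun p => (huxreg.differentiable one_ne_zero).differentiableAt
  have dR : ∀ p, DifferentiableAt ℝ ur p := fun p => (hurreg.differentiable one_ne_zero).differentiableAt
  have dT : ∀ p, DifferentiableAt ℝ uθ p := fun p => (huθreg.differentiable one_ne_zero).differentiableAt
  have hg0 : ∀ p : ℝ × ℝ,
      0 < (γ - 1) * (B p - (ux p ^ 2 + ur p ^ 2 + uθ p ^ 2) / 2) / (A p * γ) := by
    intro p
    have h1 := hBpos p
    have h2 := hApos p
    positivity
  have hρ0 : ∀ p, 0 < Hd γ (B p) (A p) (ux p ^ 2 + ur p ^ 2 + uθ p ^ 2) := fun p =>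
    Real.rpow_pos_of_pos (hg0 p) _
  have hk : ∀ p, Hd γ (B p) (A p) (ux p ^ 2 + ur p ^ 2 + uθ p ^ 2) ^ (γ - 1) =
      (γ - 1) * (B p - (ux p ^ 2 + ur p ^ 2 + uθ p ^ 2) / 2) / (A p * γ) := by
    intro p
    rw [Hd, ← Real.rpow_mul (hg0 p).le, one_div, inv_mul_cancel₀ hγ1, Real.rpow_one]
  have hργ : ∀ p, Hd γ (B p) (A p) (ux p ^ 2 + ur p ^ 2 + uθ p ^ 2) ^ γ =
      Hd γ (B p) (A p) (ux p ^ 2 + ur p ^ 2 + uθ p ^ 2) *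
        ((γ - 1) * (B p - (ux p ^ 2 + ur p ^ 2 + uθ p ^ 2) / 2) / (A p * γ)) := by
    intro p
    have h2 : Hd γ (B p) (A p) (ux p ^ 2 + ur p ^ 2 + uθ p ^ 2) ^ γ =
        Hd γ (B p) (A p) (ux p ^ 2 + ur p ^ 2 + uθ p ^ 2) ^ (1 + (γ - 1)) := by norm_num
    rw [h2, Real.rpow_add (hρ0 p), Real.rpow_one, hk p]
  have dρ : ∀ p, DifferentiableAt ℝ
      (fun p => Hd γ (B p) (A p) (ux p ^ 2 + ur p ^ 2 + uθ p ^ 2)) p := by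
    intro p
    have h1 : DifferentiableAt ℝ
        (fun p => (γ - 1) * (B p - (ux p ^ 2 + ur p ^ 2 + uθ p ^ 2) / 2) / (A p * γ)) p := by
      simp only [div_eq_mul_inv]
      exact (((dB p).sub ((((((dX p).pow 2).add ((dR p).pow 2)).add ((dT p).pow 2))).mul_const
        (2:ℝ)⁻¹)).const_mul (γ - 1)).mul (((dA p).mul_const γ).inv
          (by have := hApos p; positivity))
    simp only [Hd]
    exact h1.rpow_const (Or.inl (hg0 p).ne')
  have hDrho : ∀ (q v : ℝ × ℝ),
      fderiv ℝ (fun p => Hd γ (B p) (A p) (ux p ^ 2 + ur p ^ 2 + uθ p ^ 2)) q v =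
        Hd γ (B q) (A q) (ux q ^ 2 + ur q ^ 2 + uθ q ^ 2) /
            (A q * γ * ((γ - 1) * (B q - (ux q ^ 2 + ur q ^ 2 + uθ q ^ 2) / 2) / (A q * γ))) *
          (fderiv ℝ B q v -
            (ux q * fderiv ℝ ux q v + ur q * fderiv ℝ ur q v + uθ q * fderiv ℝ uθ q v)) -
        Hd γ (B q) (A q) (ux q ^ 2 + ur q ^ 2 + uθ q ^ 2) / ((γ - 1) * A q) *
          fderiv ℝ A q v := by
    intro q v
    have lX := comp_line (dX q) v
    have lR := comp_line (dR q) v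
    have lT := comp_line (dT q) v
    have lA := comp_line (dA q) v
    have lB := comp_line (dB q) v
    have hne : A (q + (0:ℝ) • v) * γ ≠ 0 := by
      simp only [zero_smul, add_zero]
      have := hApos q; positivity
    have hgne : ((γ - 1) *
        (B (q + (0:ℝ) • v) - (ux (q + (0:ℝ) • v) ^ 2 + ur (q + (0:ℝ) • v) ^ 2 +
          uθ (q + (0:ℝ) • v) ^ 2) / 2)) / (A (q + (0:ℝ) • v) * γ) ≠ 0 := by
      simp only [zero_smul, add_zero]
      exact (hg0 q).ne'
    have raw := ((((lB.sub ((((lX.pow 2).add (lR.pow 2)).add (lT.pow 2)).div_const 2)).const_mul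
      (γ - 1)).div (lA.mul_const γ) hne).rpow_const (p := 1/(γ-1)) (Or.inl hgne))
    have keyfn : HasDerivAt (fun t : ℝ =>
        (fun p => Hd γ (B p) (A p) (ux p ^ 2 + ur p ^ 2 + uθ p ^ 2)) (q + t • v)) _ 0 := raw
    have huniq := (comp_line (dρ q) v).unique keyfn
    rw [huniq]
    simp only [zero_smul, add_zero, Pi.div_apply, Pi.add_apply, Pi.sub_apply, Pi.pow_apply, Pi.mul_apply]
    rw [Real.rpow_sub (hg0 q), Real.rpow_one, Hd]
    have hAq : A q ≠ 0 := (hApos q).ne'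
    have hEq : B q - (ux q ^ 2 + ur q ^ 2 + uθ q ^ 2) / 2 ≠ 0 := (hBpos q).ne'
    have hGq : ((γ - 1) * (B q - (ux q ^ 2 + ur q ^ 2 + uθ q ^ 2) / 2) / (A q * γ)) ^
        (1 / (γ - 1)) ≠ 0 := (Real.rpow_pos_of_pos (hg0 q) _).ne'
    have hγne : γ ≠ 0 := hγpos.ne'
    set X := ux q
    set R := ur q
    set T := uθ q
    set a := A q
    set Bq := B q
    set db := (fderiv ℝ B q) v
    set da := (fderiv ℝ A q) v
    set d1 := (fderiv ℝ ux q) v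
    set d2 := (fderiv ℝ ur q) v
    set d3 := (fderiv ℝ uθ q) v
    set E := Bq - (X ^ 2 + R ^ 2 + T ^ 2) / 2
    set G := ((γ - 1) * E / (a * γ)) ^ (1 / (γ - 1)) with hGdef
    norm_num
    field_simp
  have hDmul : ∀ (f : ℝ × ℝ → ℝ), (∀ p, DifferentiableAt ℝ f p) → ∀ (q v : ℝ × ℝ),
      fderiv ℝ (fun p => Hd γ (B p) (A p) (ux p ^ 2 + ur p ^ 2 + uθ p ^ 2) * f p) q v =
        fderiv ℝ (fun p => Hd γ (B p) (A p) (ux p ^ 2 + ur p ^ 2 + uθ p ^ 2)) q v * f q +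
          Hd γ (B q) (A q) (ux q ^ 2 + ur q ^ 2 + uθ q ^ 2) * fderiv ℝ f q v := by
    intro f hf q v
    have h := (comp_line ((dρ q).mul (hf q)) v).unique
      ((comp_line (dρ q) v).mul (comp_line (hf q) v))
    simp only [zero_smul, add_zero] at h
    exact h
  have hDP : ∀ (q v : ℝ × ℝ),
      fderiv ℝ (fun p => A p * Hd γ (B p) (A p) (ux p ^ 2 + ur p ^ 2 + uθ p ^ 2) ^ γ) q v =
        Hd γ (B q) (A q) (ux q ^ 2 + ur q ^ 2 + uθ q ^ 2) *
          (fderiv ℝ B q v -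
            (ux q * fderiv ℝ ux q v + ur q * fderiv ℝ ur q v + uθ q * fderiv ℝ uθ q v)) -
        Hd γ (B q) (A q) (ux q ^ 2 + ur q ^ 2 + uθ q ^ 2) *
          ((γ - 1) * (B q - (ux q ^ 2 + ur q ^ 2 + uθ q ^ 2) / 2) / (A q * γ)) / (γ - 1) *
          fderiv ℝ A q v := by
    intro q v
    have hdiffP : DifferentiableAt ℝ
        (fun p => A p * Hd γ (B p) (A p) (ux p ^ 2 + ur p ^ 2 + uθ p ^ 2) ^ γ) q :=
      (dA q).mul ((dρ q).rpow_const (Or.inr hγ.le))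
    have lP := (comp_line (dA q) v).mul
      ((comp_line (dρ q) v).rpow_const (p := γ) (Or.inr hγ.le))
    have h := (comp_line hdiffP v).unique lP
    rw [h, hDrho q v]
    simp only [zero_smul, add_zero]
    rw [hργ q, hk q]
    have hAq : A q ≠ 0 := (hApos q).ne'
    have hEq : B q - (ux q ^ 2 + ur q ^ 2 + uθ q ^ 2) / 2 ≠ 0 := (hBpos q).ne'
    have hγne : γ ≠ 0 := hγpos.ne'
    have hHq : Hd γ (B q) (A q) (ux q ^ 2 + ur q ^ 2 + uθ q ^ 2) ≠ 0 := (hρ0 q).ne'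
    set X := ux q
    set R := ur q
    set T := uθ q
    set a := A q
    set Bq := B q
    set H := Hd γ (B q) (A q) (X ^ 2 + R ^ 2 + T ^ 2)
    set db := (fderiv ℝ B q) v
    set da := (fderiv ℝ A q) v
    set d1 := (fderiv ℝ ux q) v
    set d2 := (fderiv ℝ ur q) v
    set d3 := (fderiv ℝ uθ q) v
    set E := Bq - (X ^ 2 + R ^ 2 + T ^ 2) / 2
    field_simp
    ring
  have hDsnd : ∀ (q v : ℝ × ℝ),
      fderiv ℝ (fun p : ℝ × ℝ => p.2 * uθ p) q v = v.2 * uθ q + q.2 * fderiv ℝ uθ q v := by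
    intro q v
    have lsnd : HasDerivAt (fun t : ℝ => (q + t • v).2) v.2 0 := by
      simp only [Prod.snd_add, Prod.smul_snd, smul_eq_mul]
      simpa using ((hasDerivAt_id (0 : ℝ)).mul_const v.2).const_add q.2
    have hdiff : DifferentiableAt ℝ (fun p : ℝ × ℝ => p.2 * uθ p) q :=
      differentiableAt_snd.mul (dT q)
    have h := (comp_line hdiff v).unique (lsnd.mul (comp_line (dT q) v))
    rw [h]
    simp only [zero_smul, add_zero]
  have hPA : (fun p => A p * Hd γ (B p) (A p) (ux p ^ 2 + ur p ^ 2 + uθ p ^ 2) ^ γ /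
      Hd γ (B p) (A p) (ux p ^ 2 + ur p ^ 2 + uθ p ^ 2) ^ γ) = A := by
    funext p
    exact mul_div_cancel_right₀ _ (Real.rpow_pos_of_pos (hρ0 p) γ).ne'
  refine forall₂_congr fun q hq => ?_
  simp only [EulerAx, DCAx, dx, dr, cSq]
  rw [hPA, hDmul ux dX q (1,0), hDmul ur dR q (0,1), hDP q (1,0), hDP q (0,1),
      hDsnd q (1,0), hDsnd q (0,1), hDrho q (1,0), hDrho q (0,1), hk q]
  have hr : q.2 ≠ 0 := hq.ne'
  have hAq : A q ≠ 0 := (hApos q).ne'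
  have hγne : γ ≠ 0 := hγpos.ne'
  have hEpos := hBpos q
  have hHpos := hρ0 q
  have hXpos := hux q
  norm_num
  set H := Hd γ (B q) (A q) (ux q ^ 2 + ur q ^ 2 + uθ q ^ 2) with hH
  set x1 := (fderiv ℝ ux q) (1, 0)
  set x2 := (fderiv ℝ ux q) (0, 1)
  set r1 := (fderiv ℝ ur q) (1, 0)
  set r2 := (fderiv ℝ ur q) (0, 1)
  set t1 := (fderiv ℝ uθ q) (1, 0)
  set t2 := (fderiv ℝ uθ q) (0, 1)
  set a1 := (fderiv ℝ A q) (1, 0)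
  set a2 := (fderiv ℝ A q) (0, 1)
  set b1 := (fderiv ℝ B q) (1, 0)
  set b2 := (fderiv ℝ B q) (0, 1)
  set X := ux q
  set R := ur q
  set T := uθ q
  set a := A q
  set Bq := B q
  set E := Bq - (X ^ 2 + R ^ 2 + T ^ 2) / 2 with hE
  have hc2 : a * γ * ((γ - 1) * E / (a * γ)) = (γ - 1) * E := by field_simp
  rw [hc2]
  have hEne : E ≠ 0 := hEpos.ne'
  have hHne : H ≠ 0 := hHpos.ne'
  have hXne : X ≠ 0 := hXpos.ne'
  clear_value H x1 x2 r1 r2 t1 t2 a1 a2 b1 b2 X R T a Bq E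
  clear hDrho hDmul hDP hDsnd hPA hk hργ dρ hsubsonic hg0 hρ0 dA dB dX dR dT
  clear hAreg hBreg huxreg hurreg huθreg hApos hBpos hux hEpos hHpos hXpos hH hE
  have hHγ : H * (γ - 1) ≠ 0 := mul_ne_zero hHne hγ1
  constructor
  · rintro ⟨e1, e2, e3, e4, e5⟩
    have e4' := e4.resolve_left hHne
    have e5' := e5.resolve_left hHne
    field_simp at e1 e2 e3
    have pe2 : a * γ * (X * x1 + R * x2) + a * γ * (b1 - (X * x1 + R * r1 + T * t1)) -
        E * a1 = 0 := by
      refine cancel_left hHγ ?_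
      linear_combination (γ - 1) * e2
    have pe3 : a * γ * (q.2 * (X * r1 + R * r2) - T ^ 2) +
        a * γ * q.2 * (b2 - (X * x2 + R * r2 + T * t2)) - E * q.2 * a2 = 0 := by
      refine cancel_left hHγ ?_
      linear_combination (γ - 1) * e3
    have pe1 : q.2 * a * X * (b1 - (X * x1 + R * r1 + T * t1)) - q.2 * E * X * a1 +
        (γ - 1) * E * a * q.2 * x1 + q.2 * a * R * (b2 - (X * x2 + R * r2 + T * t2)) -
        q.2 * E * R * a2 + (γ - 1) * E * a * q.2 * r2 + (γ - 1) * E * a * R = 0 := by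
      refine cancel_left hHγ ?_
      linear_combination (γ - 1) * e1
    refine ⟨?_, ?_, e4', e5', ?_⟩
    · -- C1
      have key : q.2 * (((γ - 1) * E - X ^ 2) * x1 + ((γ - 1) * E - R ^ 2) * r2 -
          X * R * (r1 + x2)) + R * ((γ - 1) * E + T ^ 2) = 0 := by
        refine cancel_left (mul_ne_zero hAq hγne) ?_
        linear_combination γ * pe1 - q.2 * X * pe2 - R * pe3 + (γ - 1) * q.2 * E * e5'
      field_simp
      linear_combination key
    · -- C2
      field_simp
      linear_combination pe3
    · -- C5
      have key : X * b1 + R * b2 = 0 := by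
        refine cancel_left (mul_ne_zero (mul_ne_zero hAq hγne) hr) ?_
        linear_combination q.2 * X * pe2 + R * pe3 + a * γ * T * e4' + E * q.2 * e5'
      exact key
  · rintro ⟨c1, c2, c3, c4, c5⟩
    field_simp at c1 c2
    have pc2 : a * γ * (q.2 * (X * r1 + R * r2) - T ^ 2) +
        a * γ * q.2 * (b2 - (X * x2 + R * r2 + T * t2)) - E * q.2 * a2 = 0 := by
      linear_combination c2
    have pe2f : a * γ * (X * x1 + R * x2) + a * γ * (b1 - (X * x1 + R * r1 + T * t1)) -
        E * a1 = 0 := by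
      refine cancel_left (mul_ne_zero hr hXne) ?_
      linear_combination a * γ * q.2 * c5 - R * pc2 - a * γ * T * c3 - E * q.2 * c4
    have pe1f : q.2 * a * X * (b1 - (X * x1 + R * r1 + T * t1)) - q.2 * E * X * a1 +
        (γ - 1) * E * a * q.2 * x1 + q.2 * a * R * (b2 - (X * x2 + R * r2 + T * t2)) -
        q.2 * E * R * a2 + (γ - 1) * E * a * q.2 * r2 + (γ - 1) * E * a * R = 0 := by
      refine cancel_left hγne ?_
      linear_combination a * γ * c1 + q.2 * X * pe2f + R * pc2 - (γ - 1) * q.2 * E * c4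
    refine ⟨?_, ?_, ?_, Or.inr c3, Or.inr c4⟩
    · field_simp
      linear_combination H * pe1f
    · field_simp
      linear_combination H * pe2f
    · field_simp
      linear_combination H * pc2


end ContactDisc
end
end

section
/- Let (ρ, u_x, u_r, u_θ) be a smooth axisymmetric flow in the inner region of the cylinder with ρu_x bounded between two positive constants, so that C₁r² ≤ ∫₀^r s ρu_x(x,s) ds ≤ C₂r² for positive constants C₁, C₂. Then the modified Lagrangian transformation y₁ = x, y₂(x,r) = (∫₀^r s ρ u_x(x,s) ds)^{1/2} has Jacobian ∂(y₁,y₂)/∂(x,r) = rρu_x/(2y₂) ≥ C₃ > 0 for some constant C₃, hence is invertible; moreover, under this transformation the free boundary r = g_cd(x) (where ∫₀^{g_cd(x)} sρu_x(x,s)ds = m² for all x) is mapped to the fixed straight line y₂ = m, and the radius is recovered by the formula r(y₁,y₂) = (2∫₀^{y₂} 2s/(ρu_x)(y₁,s) ds)^{1/2}. -/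
noncomputable section
open Real Set MeasureTheory

namespace ContactDisc


private lemma aux_statement5 (m c1 C1 C2 gx : ℝ)
    (hm : 0 < m) (hc1 : 0 < c1) (hC1 : 0 < C1) (hC12 : C1 ≤ C2) (hgx : 0 < gx)
    (J : ℝ → ℝ) (hJcont : Continuous J)
    (hbounds : ∀ r ∈ Icc (0:ℝ) gx, c1 ≤ J r)
    (hint : ∀ r ∈ Icc (0:ℝ) gx,
      C1 * r ^ 2 ≤ (∫ s in (0:ℝ)..r, s * J s) ∧ (∫ s in (0:ℝ)..r, s * J s) ≤ C2 * r ^ 2)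
    (hmass : (∫ s in (0:ℝ)..gx, s * J s) = m ^ 2) :
    (∀ r ∈ Ioo (0:ℝ) gx,
        HasDerivAt (fun t => Real.sqrt (∫ s in (0:ℝ)..t, s * J s))
          (r * J r / (2 * Real.sqrt (∫ s in (0:ℝ)..r, s * J s))) r ∧
        c1 / (2 * Real.sqrt C2) ≤ r * J r / (2 * Real.sqrt (∫ s in (0:ℝ)..r, s * J s))) ∧
      InjOn (fun r => Real.sqrt (∫ s in (0:ℝ)..r, s * J s)) (Icc 0 gx) ∧
      Real.sqrt (∫ s in (0:ℝ)..gx, s * J s) = m ∧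
      (∀ R : ℝ → ℝ,
        (∀ r ∈ Icc (0:ℝ) gx, R (Real.sqrt (∫ s in (0:ℝ)..r, s * J s)) = r) →
        ∀ r ∈ Icc (0:ℝ) gx,
          r = Real.sqrt (2 * ∫ s in (0:ℝ)..(Real.sqrt (∫ s in (0:ℝ)..r, s * J s)),
              2 * s / J (R s))) := by
  have hC2 : 0 < C2 := lt_of_lt_of_le hC1 hC12
  have hsqC2 : 0 < Real.sqrt C2 := Real.sqrt_pos.2 hC2
  have hJi : Continuous fun s => s * J s := continuous_id.mul hJcont
  have hIderiv : ∀ t : ℝ, HasDerivAt (fun u => ∫ s in (0:ℝ)..u, s * J s) (t * J t) t := fun t =>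
    intervalIntegral.integral_hasDerivAt_right (hJi.intervalIntegrable 0 t)
      (hJi.stronglyMeasurableAtFilter _ _) hJi.continuousAt
  have hIcont : Continuous (fun u => ∫ s in (0:ℝ)..u, s * J s) :=
    continuous_iff_continuousAt.2 fun t => (hIderiv t).continuousAt
  have hI0 : (∫ s in (0:ℝ)..(0:ℝ), s * J s) = 0 := intervalIntegral.integral_same
  have hφcont : Continuous (fun u => Real.sqrt (∫ s in (0:ℝ)..u, s * J s)) :=
    Real.continuous_sqrt.comp hIcont
  have hφ0 : Real.sqrt (∫ s in (0:ℝ)..(0:ℝ), s * J s) = 0 := by rw [hI0, Real.sqrt_zero]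
  have hφg : Real.sqrt (∫ s in (0:ℝ)..gx, s * J s) = m := by
    rw [hmass]; exact Real.sqrt_sq hm.le
  have hIpos : ∀ t ∈ Ioc (0:ℝ) gx, 0 < ∫ s in (0:ℝ)..t, s * J s := fun t ht =>
    lt_of_lt_of_le (mul_pos hC1 (pow_pos ht.1 2)) (hint t ⟨ht.1.le, ht.2⟩).1
  have hder : ∀ t ∈ Ioc (0:ℝ) gx,
      HasDerivAt (fun u => Real.sqrt (∫ s in (0:ℝ)..u, s * J s))
        (t * J t / (2 * Real.sqrt (∫ s in (0:ℝ)..t, s * J s))) t :=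
    fun t ht => HasDerivAt.sqrt (hIderiv t) (hIpos t ht).ne'
  have hbnd : ∀ t ∈ Ioo (0:ℝ) gx,
      c1 / (2 * Real.sqrt C2) ≤ t * J t / (2 * Real.sqrt (∫ s in (0:ℝ)..t, s * J s)) := by
    intro t ht
    have htI : t ∈ Icc (0:ℝ) gx := ⟨ht.1.le, ht.2.le⟩
    have hsq : 0 < Real.sqrt (∫ s in (0:ℝ)..t, s * J s) :=
      Real.sqrt_pos.2 (hIpos t ⟨ht.1, ht.2.le⟩)
    have h1 : Real.sqrt (∫ s in (0:ℝ)..t, s * J s) ≤ Real.sqrt C2 * t := by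
      calc Real.sqrt (∫ s in (0:ℝ)..t, s * J s) ≤ Real.sqrt (C2 * t ^ 2) :=
            Real.sqrt_le_sqrt (hint t htI).2
        _ = Real.sqrt C2 * t := by
            rw [Real.sqrt_mul hC2.le, Real.sqrt_sq ht.1.le]
    have hnum : c1 * t ≤ t * J t := by
      rw [mul_comm]; exact mul_le_mul_of_nonneg_left (hbounds t htI) ht.1.le
    have hmain : c1 * t / (2 * Real.sqrt C2 * t) ≤
        t * J t / (2 * Real.sqrt (∫ s in (0:ℝ)..t, s * J s)) := by
      apply div_le_div₀ (mul_nonneg ht.1.le (le_trans hc1.le (hbounds t htI))) hnum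
        (mul_pos two_pos hsq)
      calc 2 * Real.sqrt (∫ s in (0:ℝ)..t, s * J s) ≤ 2 * (Real.sqrt C2 * t) := by linarith
        _ = 2 * Real.sqrt C2 * t := by ring
    have hfin : c1 * t / (2 * Real.sqrt C2 * t) = c1 / (2 * Real.sqrt C2) := by
      rw [mul_comm (2 * Real.sqrt C2) t, mul_comm c1 t, mul_div_mul_left _ _ ht.1.ne']
    rw [hfin] at hmain
    exact hmain
  have hmonoS : StrictMonoOn (fun u => Real.sqrt (∫ s in (0:ℝ)..u, s * J s)) (Icc 0 gx) := by
    apply strictMonoOn_of_deriv_pos (convex_Icc 0 gx) hφcont.continuousOn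
    intro t ht
    rw [interior_Icc] at ht
    rw [(hder t ⟨ht.1, ht.2.le⟩).deriv]
    exact lt_of_lt_of_le (div_pos hc1 (mul_pos two_pos hsqC2)) (hbnd t ht)
  refine ⟨fun r hr => ⟨hder r ⟨hr.1, hr.2.le⟩, hbnd r hr⟩, hmonoS.injOn, hφg, ?_⟩
  intro R hR
  -- global facts about R
  have hsurj : Icc (0:ℝ) m ⊆ (fun u => Real.sqrt (∫ s in (0:ℝ)..u, s * J s)) '' Icc 0 gx := by
    have h := intermediate_value_Icc hgx.le hφcont.continuousOn
    simpa [hφ0, hφg] using h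
  have hRmem : ∀ s ∈ Icc (0:ℝ) m, R s ∈ Icc (0:ℝ) gx ∧
      Real.sqrt (∫ u in (0:ℝ)..(R s), u * J u) = s := by
    intro s hs
    obtain ⟨t, ht, hts⟩ := hsurj hs
    have hts' : Real.sqrt (∫ u in (0:ℝ)..t, u * J u) = s := hts
    have h1 : R s = t := by rw [← hts']; exact hR t ht
    rw [h1]; exact ⟨ht, hts'⟩
  have hφmem : ∀ t ∈ Icc (0:ℝ) gx, Real.sqrt (∫ s in (0:ℝ)..t, s * J s) ∈ Icc (0:ℝ) m := by
    intro t ht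
    refine ⟨Real.sqrt_nonneg _, ?_⟩
    have h2 : Real.sqrt (∫ s in (0:ℝ)..t, s * J s) ≤ Real.sqrt (∫ s in (0:ℝ)..gx, s * J s) :=
      hmonoS.monotoneOn ht (right_mem_Icc.2 hgx.le) ht.2
    rwa [hφg] at h2
  have hRmono : MonotoneOn R (Icc (0:ℝ) m) := by
    intro s1 h1 s2 h2 h12
    by_contra hlt
    push_neg at hlt
    have hc : Real.sqrt (∫ u in (0:ℝ)..(R s2), u * J u) <
        Real.sqrt (∫ u in (0:ℝ)..(R s1), u * J u) :=
      hmonoS (hRmem s2 h2).1 (hRmem s1 h1).1 hlt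
    rw [(hRmem s1 h1).2, (hRmem s2 h2).2] at hc
    exact absurd h12 (not_le.2 hc)
  have hR0 : R 0 = 0 := by
    have h := hR 0 (left_mem_Icc.2 hgx.le); rwa [hφ0] at h
  have hRm : R m = gx := by
    have h := hR gx (right_mem_Icc.2 hgx.le); rwa [hφg] at h
  have hRimg : R '' Icc (0:ℝ) m = Icc (0:ℝ) gx := by
    apply Subset.antisymm
    · rintro _ ⟨s, hs, rfl⟩; exact (hRmem s hs).1
    · intro t ht; exact ⟨_, hφmem t ht, hR t ht⟩
  have hRcont : ContinuousOn R (Icc (0:ℝ) m) := by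
    intro s hs
    rcases hs.1.eq_or_lt with h0s | h0s
    · rw [← h0s]
      refine (continuousWithinAt_right_of_monotoneOn_of_image_mem_nhdsWithin hRmono ?_ ?_).mono
        Icc_subset_Ici_self
      · exact Icc_mem_nhdsGE_of_mem ⟨le_refl _, hm⟩
      · rw [hRimg, hR0]; exact Icc_mem_nhdsGE_of_mem ⟨le_refl _, hgx⟩
    rcases hs.2.eq_or_lt with hsm | hsm
    · rw [hsm]
      refine (continuousWithinAt_left_of_monotoneOn_of_image_mem_nhdsWithin hRmono ?_ ?_).mono
        Icc_subset_Iic_self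
      · exact Icc_mem_nhdsLE_of_mem ⟨hm, le_refl _⟩
      · rw [hRimg, hRm]; exact Icc_mem_nhdsLE_of_mem ⟨hgx, le_refl _⟩
    · apply ContinuousAt.continuousWithinAt
      apply continuousAt_of_monotoneOn_of_image_mem_nhds hRmono (Icc_mem_nhds h0s hsm)
      rw [hRimg]
      have hmem := hRmem s ⟨h0s.le, hsm.le⟩
      have hpos : 0 < R s := by
        rcases hmem.1.1.eq_or_lt with h | h
        · exfalso
          have h2 := hmem.2
          rw [← h, hφ0] at h2
          exact h0s.ne h2
        · exact h
      have hlt : R s < gx := by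
        rcases hmem.1.2.eq_or_lt with h | h
        · exfalso
          have h2 := hmem.2
          rw [h, hφg] at h2
          exact hsm.ne' h2
        · exact h
      exact Icc_mem_nhds hpos hlt
  have hfcont : ContinuousOn (fun s => 2 * s / J (R s)) (Icc (0:ℝ) m) := by
    apply ContinuousOn.div
    · exact (continuous_const.mul continuous_id).continuousOn
    · exact hJcont.comp_continuousOn hRcont
    · intro s hs
      exact (lt_of_lt_of_le hc1 (hbounds (R s) (hRmem s hs).1)).ne'
  intro r hr
  rcases hr.1.eq_or_lt with h0 | h0
  · rw [← h0, hφ0, intervalIntegral.integral_same, mul_zero, Real.sqrt_zero]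
  -- substitution on [0, r]
  have himg : (fun u => Real.sqrt (∫ s in (0:ℝ)..u, s * J s)) '' Icc (0:ℝ) r ⊆ Icc (0:ℝ) m := by
    rintro _ ⟨t, ht, rfl⟩
    exact hφmem t ⟨ht.1, ht.2.trans hr.2⟩
  have heq : EqOn (fun t : ℝ => t)
      (fun t : ℝ => (t * J t / (2 * Real.sqrt (∫ s in (0:ℝ)..t, s * J s))) •
        ((fun s => 2 * s / J (R s)) ∘ fun u => Real.sqrt (∫ s in (0:ℝ)..u, s * J s)) t)
      (Icc (0:ℝ) r) := by
    intro t ht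
    rcases ht.1.eq_or_lt with h | hpos
    · simp [← h, hφ0, smul_eq_mul]
    · have htg : t ∈ Icc (0:ℝ) gx := ⟨hpos.le, ht.2.trans hr.2⟩
      have hRt : R (Real.sqrt (∫ s in (0:ℝ)..t, s * J s)) = t := hR t htg
      have hsq : 0 < Real.sqrt (∫ s in (0:ℝ)..t, s * J s) :=
        Real.sqrt_pos.2 (hIpos t ⟨hpos, htg.2⟩)
      have hJt : 0 < J t := lt_of_lt_of_le hc1 (hbounds t htg)
      simp only [smul_eq_mul, Function.comp, hRt]
      rw [div_mul_div_comm,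
        eq_div_iff (mul_pos (mul_pos two_pos hsq) hJt).ne']
      ring
  have key : (∫ t in (0:ℝ)..r, (t * J t / (2 * Real.sqrt (∫ s in (0:ℝ)..t, s * J s))) •
        ((fun s => 2 * s / J (R s)) ∘ fun u => Real.sqrt (∫ s in (0:ℝ)..u, s * J s)) t)
      = ∫ u in (Real.sqrt (∫ s in (0:ℝ)..(0:ℝ), s * J s))..(Real.sqrt
          (∫ s in (0:ℝ)..r, s * J s)), 2 * u / J (R u) := by
    apply intervalIntegral.integral_comp_smul_deriv''' hφcont.continuousOn
    · intro t ht
      rw [min_eq_left hr.1, max_eq_right hr.1] at ht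
      exact (hder t ⟨ht.1, ht.2.le.trans hr.2⟩).hasDerivWithinAt
    · rw [min_eq_left hr.1, max_eq_right hr.1]
      exact hfcont.mono ((image_mono Ioo_subset_Icc_self).trans himg)
    · rw [uIcc_of_le hr.1]
      exact (hfcont.mono himg).integrableOn_compact (isCompact_Icc.image_of_continuousOn hφcont.continuousOn)
    · rw [uIcc_of_le hr.1]
      exact (continuous_id.integrableOn_Icc).congr_fun heq measurableSet_Icc
  have hlhs : (∫ t in (0:ℝ)..r, (t * J t / (2 * Real.sqrt (∫ s in (0:ℝ)..t, s * J s))) •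
        ((fun s => 2 * s / J (R s)) ∘ fun u => Real.sqrt (∫ s in (0:ℝ)..u, s * J s)) t)
      = r ^ 2 / 2 := by
    rw [← intervalIntegral.integral_congr (by rw [uIcc_of_le hr.1]; exact heq),
      integral_id]
    ring
  rw [hφ0] at key
  rw [← key, hlhs]
  rw [show (2:ℝ) * (r ^ 2 / 2) = r ^ 2 by ring, Real.sqrt_sq hr.1]


/-- properties of the modified Lagrangian transformation
`y₁ = x`, `y₂(x,r) = (∫₀^r s ρu_x(x,s) ds)^{1/2}`: its Jacobian equals
`rρu_x/(2y₂)` and is bounded below by a positive constant `C₃` (hence the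
transformation is invertible); the free boundary `r = g_cd(x)` is mapped onto the
fixed line `y₂ = m`; and the radius is recovered from any inverse `R` by
`r = (2∫₀^{y₂} 2s/(ρu_x) ds)^{1/2}`. -/
theorem statement_5 (L m c1 c2 C1 C2 : ℝ)
    (hL : 0 < L) (hm : 0 < m) (hc1 : 0 < c1) (hc12 : c1 ≤ c2)
    (hC1 : 0 < C1) (hC12 : C1 ≤ C2)
    (g : ℝ → ℝ) (hg : ∀ x ∈ Ioo 0 L, 0 < g x)
    (ρ ux : ℝ × ℝ → ℝ)
    (hcont : Continuous fun p : ℝ × ℝ => ρ p * ux p)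
    (hbounds : ∀ x ∈ Ioo 0 L, ∀ r ∈ Icc 0 (g x),
      c1 ≤ ρ (x, r) * ux (x, r) ∧ ρ (x, r) * ux (x, r) ≤ c2)
    (hint : ∀ x ∈ Ioo 0 L, ∀ r ∈ Icc 0 (g x),
      C1 * r ^ 2 ≤ (∫ s in (0:ℝ)..r, s * (ρ (x, s) * ux (x, s))) ∧
      (∫ s in (0:ℝ)..r, s * (ρ (x, s) * ux (x, s))) ≤ C2 * r ^ 2)
    (hmass : ∀ x ∈ Ioo 0 L, (∫ s in (0:ℝ)..(g x), s * (ρ (x, s) * ux (x, s))) = m ^ 2) :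
    ∃ C3 > 0, ∀ x ∈ Ioo 0 L,
      (∀ r ∈ Ioo 0 (g x),
        HasDerivAt (fun t => Real.sqrt (∫ s in (0:ℝ)..t, s * (ρ (x, s) * ux (x, s))))
          (r * (ρ (x, r) * ux (x, r)) /
            (2 * Real.sqrt (∫ s in (0:ℝ)..r, s * (ρ (x, s) * ux (x, s))))) r ∧
        C3 ≤ r * (ρ (x, r) * ux (x, r)) /
            (2 * Real.sqrt (∫ s in (0:ℝ)..r, s * (ρ (x, s) * ux (x, s))))) ∧
      InjOn (fun r => Real.sqrt (∫ s in (0:ℝ)..r, s * (ρ (x, s) * ux (x, s))))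
        (Icc 0 (g x)) ∧
      Real.sqrt (∫ s in (0:ℝ)..(g x), s * (ρ (x, s) * ux (x, s))) = m ∧
      (∀ R : ℝ → ℝ,
        (∀ r ∈ Icc 0 (g x),
          R (Real.sqrt (∫ s in (0:ℝ)..r, s * (ρ (x, s) * ux (x, s)))) = r) →
        ∀ r ∈ Icc 0 (g x),
          r = Real.sqrt (2 *
            ∫ s in (0:ℝ)..(Real.sqrt (∫ s in (0:ℝ)..r, s * (ρ (x, s) * ux (x, s)))),
              2 * s / (ρ (x, R s) * ux (x, R s)))) := by
  refine ⟨c1 / (2 * Real.sqrt C2),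
    div_pos hc1 (mul_pos two_pos (Real.sqrt_pos.2 (lt_of_lt_of_le hC1 hC12))), ?_⟩
  intro x hx
  exact aux_statement5 m c1 C1 C2 (g x) hm hc1 hC1 hC12 (hg x hx)
    (fun s => ρ (x, s) * ux (x, s)) (hcont.comp (Continuous.prodMk_right x))
    (fun r hr => (hbounds x hx r hr).1) (hint x hx) (hmass x hx)

end ContactDisc
end
end
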